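/- Curvature of the lazy random-bit-update walk on the discrete cube: let 𝒳 = {0,1}^N with the Hamming distance d (the number of coordinates at which two sequences differ), and consider the Markov kernel given by P_x({x}) = 1/2 and P_x({(x₁,…,1−x_i,…,x_N)}) = 1/(2N) for each 1 ≤ i ≤ N (choose a uniformly random position and replace its bit by an independent fair coin). Then this chain has positive Ricci curvature κ = 1/N; in particular W₁(P_x, P_y) ≤ (1 − 1/N) d(x,y) for all x, y ∈ {0,1}^N. -/

import Mathlib

open MeasureTheory ENNReal
open scoped NNReal

noncomputable section

variable {X : Type*} [MetricSpace X] [MeasurableSpace X]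

/-- The L¹ Wasserstein distance between two measures on a metric space,
defined as the infimum of the transport cost over all couplings. -/
def W1 (μ ν : Measure X) : ℝ≥0∞ :=
  ⨅ (ξ : Measure (X × X)) (_ : ξ.map Prod.fst = μ) (_ : ξ.map Prod.snd = ν),
    ∫⁻ p, edist p.1 p.2 ∂ξ

/-- The Markov kernel `P` has (coarse) Ricci curvature at least `κ`:
`W₁(P_x, P_y) ≤ (1-κ) d(x,y)` for all `x, y`. -/
def PosCurvature (P : X → Measure X) (κ : ℝ) : Prop :=
  ∀ x y : X, W1 (P x) (P y) ≤ ENNReal.ofReal ((1 - κ) * dist x y)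

/-- `N`-step transition kernel: `stepN P 0 x = δ_x` and
`stepN P (N+1) x = ∫ P_z(dy) (stepN P N x)(dz)`. -/
def stepN (P : X → Measure X) : ℕ → X → Measure X
  | 0 => fun x => Measure.dirac x
  | n + 1 => fun x => (stepN P n x).bind P

/-- Iterated averaging operator `P^N f (x) = ∫ f d(P_x^N)`. -/
def avgN (P : X → Measure X) (n : ℕ) (f : X → ℝ) (x : X) : ℝ :=
  ∫ y, f y ∂(stepN P n x)

/-- Law of the trajectory `(X_1, …, X_n)` of the Markov chain started at `x`. -/
def pathLaw (P : X → Measure X) : (n : ℕ) → X → Measure (Fin n → X)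
  | 0 => fun _ => Measure.dirac (fun i : Fin 0 => i.elim0)
  | n + 1 => fun x => (P x).bind fun y => (pathLaw P n y).map (fun p => Fin.cons y p)

/-- Empirical mean `π̂(f) = (1/T) ∑_{k=T₀+1}^{T₀+T} f(X_k)`, as a function of the
trajectory `(X_1, …, X_{T₀+T})`. -/
def empMean (f : X → ℝ) (T₀ T : ℕ) (p : Fin (T₀ + T) → X) : ℝ :=
  (1 / (T : ℝ)) * ∑ i : Fin (T₀ + T), if T₀ ≤ (i : ℕ) then f (p i) else 0

/-- Expectation `E_x π̂(f)` of the empirical mean for the chain started at `x`. -/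
def empExp (P : X → Measure X) (f : X → ℝ) (T₀ T : ℕ) (x : X) : ℝ :=
  ∫ p, empMean f T₀ T p ∂(pathLaw P (T₀ + T) x)

/-- Variance `Var_x π̂(f)` of the empirical mean for the chain started at `x`. -/
def empVar (P : X → Measure X) (f : X → ℝ) (T₀ T : ℕ) (x : X) : ℝ :=
  ∫ p, (empMean f T₀ T p - empExp P f T₀ T x) ^ 2 ∂(pathLaw P (T₀ + T) x)

/-- Lipschitz seminorm `‖f‖_Lip = sup_{x ≠ y} |f(x) - f(y)|/d(x,y)`, as the least
Lipschitz constant of `f`. -/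
def lipNorm (f : X → ℝ) : ℝ :=
  sInf {K : ℝ | ∀ x y : X, |f x - f y| ≤ K * dist x y}

/-- Coarse diffusion constant `σ(x)² = ½ ∬ d(y,z)² P_x(dy) P_x(dz)`. -/
def diffSq (P : X → Measure X) (x : X) : ℝ :=
  (1 / 2) * ∫ y, ∫ z, dist y z ^ 2 ∂(P x) ∂(P x)

/-- Local dimension `n_x`. -/
def localDim (P : X → Measure X) (x : X) : ℝ :=
  sInf {r : ℝ | ∃ f : X → ℝ, (∃ K : ℝ≥0, LipschitzWith K f) ∧
    (∫ y, ∫ z, |f y - f z| ^ 2 ∂(P x) ∂(P x)) ≠ 0 ∧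
    r = (∫ y, ∫ z, dist y z ^ 2 ∂(P x) ∂(P x)) /
        (∫ y, ∫ z, |f y - f z| ^ 2 ∂(P x) ∂(P x))}

/-- Support of a measure: the set of points all of whose open neighborhoods have
positive measure. -/
def msupp (μ : Measure X) : Set X :=
  {x : X | ∀ U : Set X, IsOpen U → x ∈ U → μ U ≠ 0}

/-- Granularity `σ_∞ = ½ sup_x diam (supp P_x)`, valued in `ℝ≥0∞`. -/
def granularity (P : X → Measure X) : ℝ≥0∞ :=
  (1 / 2) * ⨆ x : X, EMetric.diam (msupp (P x))

/-- Eccentricity `E(x) = ∫ d(x,y) π(dy)`. -/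
def ecc (π : Measure X) (x : X) : ℝ := ∫ y, dist x y ∂π


/-- The space of `N`-bit sequences with the Hamming distance. -/
abbrev Cube (N : ℕ) := Hamming (fun _ : Fin N => Bool)

instance (N : ℕ) : MeasurableSpace (Cube N) := ⊤

/-- Flip the `i`-th bit of `x`. -/
def flipBit {N : ℕ} (x : Cube N) (i : Fin N) : Cube N :=
  Hamming.toHamming (Function.update (Hamming.ofHamming x) i (!(Hamming.ofHamming x i)))

/-- The lazy random-bit-update walk on the discrete cube: with probability `1/2` stay,
and with probability `1/(2N)` flip the `i`-th bit, for each `i`. -/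
def cubeKernel (N : ℕ) : Cube N → Measure (Cube N) := fun x =>
  (1 / 2 : ℝ≥0∞) • Measure.dirac x
    + ∑ i : Fin N, (1 / (2 * (N : ℝ≥0∞))) • Measure.dirac (flipBit x i)

section CubeAux

open Hamming Finset

instance cubeMSC (N : ℕ) : MeasurableSingletonClass (Cube N) :=
  ⟨fun _ => MeasurableSpace.measurableSet_top⟩

variable {N : ℕ}

/-- Update a single coordinate of a point of the cube. -/
def upd (x : Cube N) (i : Fin N) (b : Bool) : Cube N :=
  toHamming (Function.update (ofHamming x) i b)

lemma cube_edist (u v : Cube N) :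
    edist u v = (hammingDist (ofHamming u) (ofHamming v) : ℝ≥0∞) := by
  rw [edist_nndist, nndist_eq_hammingDist]
  simp

lemma hd_update_both (f g : Fin N → Bool) (i : Fin N) (b : Bool) :
    hammingDist (Function.update f i b) (Function.update g i b)
      = if f i = g i then hammingDist f g else hammingDist f g - 1 := by
  classical
  have h1 : ({j | Function.update f i b j ≠ Function.update g i b j} : Finset (Fin N))
      = ({j | f j ≠ g j} : Finset (Fin N)).erase i := by
    ext j
    by_cases hj : j = i <;> simp [hj, Function.update_apply]
  unfold hammingDist
  rw [h1, Finset.card_erase_eq_ite]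
  by_cases h : f i = g i <;> simp [h, hammingDist]

lemma hd_update_left (g : Fin N → Bool) (i : Fin N) (b : Bool) :
    hammingDist (Function.update g i b) g = if b = g i then 0 else 1 := by
  classical
  have h1 : ({j | Function.update g i b j ≠ g j} : Finset (Fin N))
      = if b = g i then (∅ : Finset (Fin N)) else {i} := by
    ext j
    by_cases hj : j = i <;> split_ifs with h <;>
      simp [hj, Function.update_apply, h]
  unfold hammingDist
  rw [h1]
  split_ifs <;> simp

lemma measure_map_finset_sum {α β ι : Type*} [MeasurableSpace α] [MeasurableSpace β]
    (s : Finset ι) (μ : ι → Measure α) {f : α → β} (hf : Measurable f) :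
    (∑ i ∈ s, μ i).map f = ∑ i ∈ s, (μ i).map f := by
  classical
  induction s using Finset.cons_induction with
  | empty => simp
  | cons i s hi ih => rw [Finset.sum_cons, Finset.sum_cons, Measure.map_add _ _ hf, ih]

lemma N_cast_ne_zero (hN : 1 ≤ N) : (N : ℝ≥0∞) ≠ 0 :=
  Nat.cast_ne_zero.mpr (by omega)

lemma two_mul_c (hN : 1 ≤ N) : 2 * (2 * (N : ℝ≥0∞))⁻¹ = (N : ℝ≥0∞)⁻¹ := by
  rw [ENNReal.mul_inv (Or.inl two_ne_zero) (Or.inr (N_cast_ne_zero hN)), ← mul_assoc,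
    ENNReal.mul_inv_cancel two_ne_zero ENNReal.ofNat_ne_top, one_mul]

lemma N_mul_c (hN : 1 ≤ N) : (N : ℝ≥0∞) * (2 * (N : ℝ≥0∞))⁻¹ = 2⁻¹ := by
  rw [ENNReal.mul_inv (Or.inl two_ne_zero) (Or.inr (N_cast_ne_zero hN)), mul_comm (2 : ℝ≥0∞)⁻¹,
    ← mul_assoc, ENNReal.mul_inv_cancel (N_cast_ne_zero hN) (ENNReal.natCast_ne_top N), one_mul]

lemma key_arith (hN : 1 ≤ N) (d : ℕ) :
    2 * (2 * (N : ℝ≥0∞))⁻¹ * ((d * (N - 1) : ℕ) : ℝ≥0∞)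
      = ENNReal.ofReal ((1 - 1 / (N : ℝ)) * d) := by
  have hNR : (0 : ℝ) < (N : ℝ) := by exact_mod_cast hN
  have h1 : ((1 - 1 / (N : ℝ)) * d) = ((d * (N - 1) : ℕ) : ℝ) / (N : ℝ) := by
    push_cast [Nat.cast_sub hN]
    field_simp
  rw [h1, ENNReal.ofReal_div_of_pos hNR, ENNReal.ofReal_natCast, ENNReal.ofReal_natCast,
    two_mul_c hN, div_eq_mul_inv, mul_comm]

/-- Marginal of the synchronous coupling. -/
lemma coupling_marginal (hN : 1 ≤ N) (x : Cube N) :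
    (∑ i : Fin N, ((2 * (N : ℝ≥0∞))⁻¹ • Measure.dirac (upd x i true)
        + (2 * (N : ℝ≥0∞))⁻¹ • Measure.dirac (upd x i false))) = cubeKernel N x := by
  classical
  set c : ℝ≥0∞ := (2 * (N : ℝ≥0∞))⁻¹ with hc
  have key : ∀ i : Fin N,
      c • Measure.dirac (upd x i true) + c • Measure.dirac (upd x i false)
        = c • Measure.dirac x + c • Measure.dirac (flipBit x i) := by
    intro i
    have hx : upd x i (ofHamming x i) = x := by
      simp [upd, Function.update_eq_self]
    have hfl : flipBit x i = upd x i (!(ofHamming x i)) := rfl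
    cases h : ofHamming x i with
    | true =>
        rw [h] at hx hfl
        simp only [Bool.not_true] at hfl
        rw [hx, hfl]
    | false =>
        rw [h] at hx hfl
        simp only [Bool.not_false] at hfl
        rw [hx, hfl, add_comm]
  rw [Finset.sum_congr rfl (fun i _ => key i), Finset.sum_add_distrib, Finset.sum_const,
    Finset.card_univ, Fintype.card_fin, cubeKernel]
  congr 1
  · rw [← Nat.cast_smul_eq_nsmul ℝ≥0∞, smul_smul, N_mul_c hN, one_div]
  · simp [hc, one_div]

lemma sum_hd_update (f g : Fin N → Bool) :
    ∑ i : Fin N, (if f i = g i then hammingDist f g else hammingDist f g - 1)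
      = hammingDist f g * (N - 1) := by
  classical
  set d := hammingDist f g with hd
  have hcard2 : #(Finset.filter (fun i => ¬ f i = g i) Finset.univ) = d := by
    rw [hd]; simp [hammingDist, ne_eq]
  have hsplit := Finset.card_filter_add_card_filter_not
      (s := (Finset.univ : Finset (Fin N))) (p := fun i => f i = g i)
  rw [Finset.card_univ, Fintype.card_fin, hcard2] at hsplit
  rw [Finset.sum_ite, Finset.sum_const, Finset.sum_const, smul_eq_mul, smul_eq_mul,
    hcard2, show #(Finset.filter (fun i => f i = g i) Finset.univ) = N - d by omega]
  rcases Nat.eq_zero_or_pos d with h0 | h1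
  · simp [h0]
  · have h2 : (N - d) + (d - 1) = N - 1 := by omega
    calc (N - d) * d + d * (d - 1) = d * ((N - d) + (d - 1)) := by ring
      _ = d * (N - 1) := by rw [h2]

/-- Upper bound: the synchronous coupling achieves cost `(1-1/N) d(x,y)`. -/
lemma cube_upper (hN : 1 ≤ N) (x y : Cube N) :
    W1 (cubeKernel N x) (cubeKernel N y)
      ≤ ENNReal.ofReal ((1 - 1 / (N : ℝ)) * dist x y) := by
  classical
  set c : ℝ≥0∞ := (2 * (N : ℝ≥0∞))⁻¹ with hc
  set ξ : Measure (Cube N × Cube N) :=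
    ∑ i : Fin N, (c • Measure.dirac (upd x i true, upd y i true)
      + c • Measure.dirac (upd x i false, upd y i false)) with hξ
  have hfst : ξ.map Prod.fst = cubeKernel N x := by
    rw [hξ, measure_map_finset_sum _ _ measurable_fst]
    have : ∀ i : Fin N,
        ((c • Measure.dirac (upd x i true, upd y i true)
          + c • Measure.dirac (upd x i false, upd y i false)).map Prod.fst)
        = c • Measure.dirac (upd x i true) + c • Measure.dirac (upd x i false) := by
      intro i
      rw [Measure.map_add _ _ measurable_fst, Measure.map_smul, Measure.map_smul,
        Measure.map_dirac' measurable_fst, Measure.map_dirac' measurable_fst]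
    rw [Finset.sum_congr rfl (fun i _ => this i)]
    exact coupling_marginal hN x
  have hsnd : ξ.map Prod.snd = cubeKernel N y := by
    rw [hξ, measure_map_finset_sum _ _ measurable_snd]
    have : ∀ i : Fin N,
        ((c • Measure.dirac (upd x i true, upd y i true)
          + c • Measure.dirac (upd x i false, upd y i false)).map Prod.snd)
        = c • Measure.dirac (upd y i true) + c • Measure.dirac (upd y i false) := by
      intro i
      rw [Measure.map_add _ _ measurable_snd, Measure.map_smul, Measure.map_smul,
        Measure.map_dirac' measurable_snd, Measure.map_dirac' measurable_snd]
    rw [Finset.sum_congr rfl (fun i _ => this i)]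
    exact coupling_marginal hN y
  have hcost : ∫⁻ p, edist p.1 p.2 ∂ξ = ENNReal.ofReal ((1 - 1 / (N : ℝ)) * dist x y) := by
    rw [hξ, lintegral_finset_sum_measure]
    simp only [lintegral_add_measure, lintegral_smul_measure, lintegral_dirac, smul_eq_mul]
    have he : ∀ (i : Fin N) (b : Bool),
        edist (upd x i b) (upd y i b)
          = ((if ofHamming x i = ofHamming y i then hammingDist (ofHamming x) (ofHamming y)
              else hammingDist (ofHamming x) (ofHamming y) - 1 : ℕ) : ℝ≥0∞) := by
      intro i b
      rw [cube_edist]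
      simp only [upd, ofHamming_toHamming]
      rw [hd_update_both]
    have hterm : ∀ i : Fin N,
        c * edist (upd x i true) (upd y i true) + c * edist (upd x i false) (upd y i false)
          = (2 * c) * ((if ofHamming x i = ofHamming y i
              then hammingDist (ofHamming x) (ofHamming y)
              else hammingDist (ofHamming x) (ofHamming y) - 1 : ℕ) : ℝ≥0∞) := by
      intro i
      rw [he i true, he i false, two_mul, add_mul]
    rw [Finset.sum_congr rfl (fun i _ => hterm i), ← Finset.mul_sum, ← Nat.cast_sum,
      sum_hd_update, key_arith hN]
    rw [Hamming.dist_eq_hammingDist]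
  calc W1 (cubeKernel N x) (cubeKernel N y) ≤ ∫⁻ p, edist p.1 p.2 ∂ξ := by
        refine iInf_le_of_le ξ ?_
        rw [iInf_pos hfst, iInf_pos hsnd]
    _ = _ := hcost

/-- Kantorovich lower bound with test function `d(·, w)`. -/
lemma W1_test (w : Cube N) (μ ν : Measure (Cube N)) :
    (∫⁻ z, edist z w ∂μ) - ∫⁻ z, edist z w ∂ν ≤ W1 μ ν := by
  refine le_iInf fun ξ => le_iInf fun h1 => le_iInf fun h2 => ?_
  rw [← h1, ← h2, lintegral_map (measurable_of_finite _) measurable_fst,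
    lintegral_map (measurable_of_finite _) measurable_snd]
  refine le_trans (lintegral_sub_le _ _ (measurable_of_finite _)) ?_
  refine lintegral_mono fun p => ?_
  exact tsub_le_iff_right.mpr (edist_triangle _ _ _)

lemma lintegral_cubeKernel (x : Cube N) (g : Cube N → ℝ≥0∞) :
    ∫⁻ z, g z ∂(cubeKernel N x)
      = 2⁻¹ * g x + ∑ i : Fin N, (2 * (N : ℝ≥0∞))⁻¹ * g (flipBit x i) := by
  rw [cubeKernel, lintegral_add_measure, lintegral_smul_measure, lintegral_dirac,
    lintegral_finset_sum_measure]
  simp only [lintegral_smul_measure, lintegral_dirac, one_div, smul_eq_mul]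

lemma hd_upd2 {i i₀ : Fin N} (h : i ≠ i₀) :
    hammingDist (Function.update (fun _ : Fin N => false) i true)
      (Function.update (fun _ : Fin N => false) i₀ true) = 2 := by
  classical
  have h1 : ({j | Function.update (fun _ : Fin N => false) i true j
      ≠ Function.update (fun _ : Fin N => false) i₀ true j} : Finset (Fin N)) = {i, i₀} := by
    ext j
    by_cases hj : j = i <;> by_cases hj' : j = i₀ <;>
      simp only [hj, hj', Function.update_apply, Finset.mem_filter, Finset.mem_univ,
        Finset.mem_insert, Finset.mem_singleton, true_and, if_pos, if_neg, ne_eq] <;>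
      simp_all
  unfold hammingDist
  rw [h1, Finset.card_pair h]

end CubeAux

/-- **Curvature of the lazy random-bit-update walk on the discrete cube** (Example 8 of
Ollivier, Section 2.1 of Joulin–Ollivier): this chain has Ricci curvature `κ = 1/N`;
in particular `W₁(P_x,P_y) ≤ (1 − 1/N) d(x,y)` for all `x, y`, with equality for some
pair of distinct points. -/
theorem cube_walk_curvature (N : ℕ) (hN : 1 ≤ N) :
    (∀ x y : Cube N,
      W1 (cubeKernel N x) (cubeKernel N y)
        ≤ ENNReal.ofReal ((1 - 1 / (N : ℝ)) * dist x y)) ∧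
    (∃ x y : Cube N, x ≠ y ∧
      W1 (cubeKernel N x) (cubeKernel N y)
        = ENNReal.ofReal ((1 - 1 / (N : ℝ)) * dist x y)) := by
  classical
  have hupper : ∀ x y : Cube N,
      W1 (cubeKernel N x) (cubeKernel N y)
        ≤ ENNReal.ofReal ((1 - 1 / (N : ℝ)) * dist x y) := fun x y => cube_upper hN x y
  refine ⟨hupper, ?_⟩
  set i₀ : Fin N := ⟨0, hN⟩ with hi₀
  set f : Fin N → Bool := fun _ => false with hf
  set x₀ : Cube N := Hamming.toHamming f with hx₀
  set y₀ : Cube N := flipBit x₀ i₀ with hy₀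
  set c : ℝ≥0∞ := (2 * (N : ℝ≥0∞))⁻¹ with hc
  have hofx : Hamming.ofHamming x₀ = f := by simp [hx₀]
  have hofy : Hamming.ofHamming y₀ = Function.update f i₀ true := by
    simp [hy₀, flipBit, hofx, hf]
  have hne : x₀ ≠ y₀ := by
    intro h
    have h2 := congrFun (congrArg Hamming.ofHamming h) i₀
    rw [hofx, hofy] at h2
    simp [hf] at h2
  have hdist : dist x₀ y₀ = 1 := by
    rw [Hamming.dist_eq_hammingDist, hofx, hofy, hammingDist_comm, hd_update_left]
    norm_num [hf]
  have hexy : edist x₀ y₀ = 1 := by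
    rw [cube_edist, hofx, hofy, hammingDist_comm, hd_update_left]
    norm_num [hf]
  have heflipx : ∀ i : Fin N, edist (flipBit x₀ i) y₀ = if i = i₀ then 0 else 2 := by
    intro i
    have h3 : Hamming.ofHamming (flipBit x₀ i) = Function.update f i true := by
      simp [flipBit, hofx, hf]
    rw [cube_edist, h3, hofy]
    by_cases h : i = i₀
    · subst h; simp
    · rw [hd_upd2 h]; simp [h]
  have heflipy : ∀ i : Fin N, edist (flipBit y₀ i) y₀ = 1 := by
    intro i
    have h3 : Hamming.ofHamming (flipBit y₀ i)
        = Function.update (Hamming.ofHamming y₀) i (!(Hamming.ofHamming y₀ i)) := by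
      simp [flipBit]
    rw [cube_edist, h3, hd_update_left]
    simp
  have hA : ∫⁻ z, edist z y₀ ∂(cubeKernel N x₀)
      = 2⁻¹ + ((N - 1 : ℕ) : ℝ≥0∞) * (2 * c) := by
    rw [lintegral_cubeKernel, hexy, mul_one]
    congr 1
    have h4 : ∀ i : Fin N, c * edist (flipBit x₀ i) y₀
        = if i = i₀ then 0 else 2 * c := by
      intro i
      rw [heflipx i]
      split_ifs <;> ring
    rw [Finset.sum_congr rfl fun i _ => h4 i, Finset.sum_ite, Finset.sum_const_zero,
      Finset.sum_const, zero_add]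
    have h5 : (Finset.filter (fun i => ¬ i = i₀) Finset.univ) = Finset.univ.erase i₀ := by
      ext j; simp [Finset.mem_erase, and_comm]
    rw [h5, Finset.card_erase_of_mem (Finset.mem_univ _), Finset.card_univ, Fintype.card_fin,
      nsmul_eq_mul]
  have hB : ∫⁻ z, edist z y₀ ∂(cubeKernel N y₀) = 2⁻¹ := by
    rw [lintegral_cubeKernel, edist_self, mul_zero, zero_add]
    have h6 : ∀ i : Fin N, c * edist (flipBit y₀ i) y₀ = c := by
      intro i; rw [heflipy i, mul_one]
    rw [Finset.sum_congr rfl fun i _ => h6 i, Finset.sum_const, Finset.card_univ,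
      Fintype.card_fin, nsmul_eq_mul, N_mul_c hN]
  have hlow : ((N - 1 : ℕ) : ℝ≥0∞) * (2 * c) ≤ W1 (cubeKernel N x₀) (cubeKernel N y₀) := by
    refine le_trans ?_ (W1_test y₀ _ _)
    rw [hA, hB, ENNReal.add_sub_cancel_left (by simp : (2⁻¹ : ℝ≥0∞) ≠ ⊤)]
  have htarget : ENNReal.ofReal ((1 - 1 / (N : ℝ)) * dist x₀ y₀)
      = ((N - 1 : ℕ) : ℝ≥0∞) * (2 * c) := by
    have hk := key_arith (N := N) hN 1
    simp only [one_mul, Nat.cast_one] at hk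
    rw [hdist, ← hk]
    ring
  refine ⟨x₀, y₀, hne, le_antisymm (hupper x₀ y₀) ?_⟩
  rw [htarget]
  exact hlow


end
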